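/- arXiv:2207.11824 — 7 statements merged into one kernel-verified Lean document; each statement's English description precedes it below -/
import Mathlib

section
/- Let X_1,…,X_T be {0,1}-valued random variables on a probability space such that for every i, the conditional expectation of X_i given X_1,…,X_{i−1} is at most q almost surely, where 0 < q < 1. Then for every real w > 0, the probability that there exists some m with 1 ≤ m ≤ T such that ∑_{i=T−m+1}^{T} X_i ≥ √w + 6mq is at most 2^{−√w}/(4q). -/
open MeasureTheory ProbabilityTheory

/-- The σ-algebra generated by the variables `X j` for `1 ≤ j < i`. -/
def pastSigmaNat {Ω : Type*} (X : ℕ → Ω → ℝ) (i : ℕ) :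
    MeasurableSpace Ω :=
  ⨆ j : ℕ, ⨆ _ : 1 ≤ j ∧ j < i, MeasurableSpace.comap (X j) Real.measurableSpace

private lemma pastSigmaNat_le' {Ω : Type*} [mΩ : MeasurableSpace Ω] {X : ℕ → Ω → ℝ}
    (hmeas : ∀ i, Measurable (X i)) (i : ℕ) : pastSigmaNat X i ≤ mΩ :=
  iSup_le fun j => iSup_le fun _ => (hmeas j).comap_le

private lemma measurable_pastSigmaNat' {Ω : Type*} {X : ℕ → Ω → ℝ} {i j : ℕ}
    (hj : 1 ≤ j ∧ j < i) : Measurable[pastSigmaNat X i] (X j) :=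
  Measurable.of_comap_le (le_iSup_of_le j (le_iSup_of_le hj le_rfl))

private lemma prod_integral_le' {Ω : Type*} [mΩ : MeasurableSpace Ω] {μ : Measure Ω}
    [IsProbabilityMeasure μ] {X : ℕ → Ω → ℝ} {q : ℝ} (hq0 : 0 < q)
    (hmeas : ∀ i, Measurable (X i))
    (h01 : ∀ i ω, X i ω = 0 ∨ X i ω = 1)
    (T : ℕ)
    (hcond : ∀ i ∈ Finset.Icc 1 T, ∀ᵐ ω ∂μ, (μ[X i | pastSigmaNat X i]) ω ≤ q)
    (L : ℕ) (hL : 1 ≤ L) :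
    ∀ n, n ≤ T →
      ∫ ω, ∏ i ∈ Finset.Icc L n, (1 + 3 * X i ω) ∂μ ≤ (1 + 3*q) ^ (Finset.Icc L n).card := by
  have hfac_nonneg : ∀ i ω, (0:ℝ) ≤ 1 + 3 * X i ω := by
    intro i ω; rcases h01 i ω with h | h <;> rw [h] <;> norm_num
  have hfac_le : ∀ i ω, 1 + 3 * X i ω ≤ 4 := by
    intro i ω; rcases h01 i ω with h | h <;> rw [h] <;> norm_num
  have hprod_nonneg : ∀ (F : Finset ℕ) ω, (0:ℝ) ≤ ∏ i ∈ F, (1 + 3 * X i ω) := fun F ω =>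
    Finset.prod_nonneg fun i _ => hfac_nonneg i ω
  have hprod_le : ∀ (F : Finset ℕ) ω, ∏ i ∈ F, (1 + 3 * X i ω) ≤ 4 ^ F.card := by
    intro F ω
    calc ∏ i ∈ F, (1 + 3 * X i ω) ≤ ∏ _i ∈ F, (4:ℝ) :=
          Finset.prod_le_prod (fun i _ => hfac_nonneg i ω) (fun i _ => hfac_le i ω)
      _ = 4 ^ F.card := by rw [Finset.prod_const]
  have hprod_meas : ∀ (F : Finset ℕ), Measurable fun ω => ∏ i ∈ F, (1 + 3 * X i ω) := by
    intro F
    exact Finset.measurable_prod F fun i _ => (measurable_const.add ((hmeas i).const_mul 3))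
  have hprod_int : ∀ (F : Finset ℕ), Integrable (fun ω => ∏ i ∈ F, (1 + 3 * X i ω)) μ := by
    intro F
    refine Integrable.mono' (integrable_const ((4:ℝ) ^ F.card)) (hprod_meas F).aestronglyMeasurable ?_
    filter_upwards with ω
    rw [Real.norm_of_nonneg (hprod_nonneg F ω)]
    exact hprod_le F ω
  intro n
  induction n with
  | zero =>
    intro _
    have : Finset.Icc L 0 = ∅ := by
      rw [Finset.Icc_eq_empty_iff]; omega
    simp [this]
  | succ n ih =>
    intro hn
    by_cases hLn : L ≤ n + 1
    · rw [← Finset.insert_Icc_right_eq_Icc_add_one hLn]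
      have hnot : n + 1 ∉ Finset.Icc L n := by simp
      simp only [Finset.prod_insert hnot, Finset.card_insert_of_notMem hnot]
      set f : Ω → ℝ := fun ω => ∏ i ∈ Finset.Icc L n, (1 + 3 * X i ω) with hf
      have hm : pastSigmaNat X (n+1) ≤ mΩ := pastSigmaNat_le' hmeas (n+1)
      have hfmeas : StronglyMeasurable[pastSigmaNat X (n+1)] f := by
        refine Measurable.stronglyMeasurable ?_
        refine Finset.measurable_prod _ fun i hi => ?_
        have hi' : 1 ≤ i ∧ i < n + 1 := by
          simp only [Finset.mem_Icc] at hi; omega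
        exact (measurable_const.add ((measurable_pastSigmaNat' hi').const_mul 3))
      have hXint : Integrable (X (n+1)) μ := by
        refine Integrable.mono' (integrable_const 1) (hmeas (n+1)).aestronglyMeasurable ?_
        filter_upwards with ω
        rcases h01 (n+1) ω with h | h <;> rw [h] <;> norm_num
      have hfXint : Integrable (fun ω => f ω * X (n+1) ω) μ := by
        refine Integrable.mono' (integrable_const ((4:ℝ) ^ (Finset.Icc L n).card))
          ((hprod_meas _).mul (hmeas (n+1))).aestronglyMeasurable ?_
        filter_upwards with ω
        rw [Real.norm_eq_abs, abs_mul]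
        rcases h01 (n+1) ω with h | h <;> rw [h]
        · rw [abs_zero, mul_zero]; positivity
        · rw [abs_one, mul_one, abs_of_nonneg (hprod_nonneg _ ω)]
          exact hprod_le _ ω
      have hstep : ∫ ω, f ω * X (n+1) ω ∂μ ≤ q * ∫ ω, f ω ∂μ := by
        have hpull : (μ[fun ω => f ω * X (n+1) ω | pastSigmaNat X (n+1)])
            =ᵐ[μ] fun ω => f ω * (μ[X (n+1) | pastSigmaNat X (n+1)]) ω := by
          have := condExp_stronglyMeasurable_mul_of_bound hm hfmeas hXint
            ((4:ℝ) ^ (Finset.Icc L n).card) ?_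
          · exact this
          · filter_upwards with ω
            rw [Real.norm_of_nonneg (hprod_nonneg _ ω)]
            exact hprod_le _ ω
        have hcond' : ∀ᵐ ω ∂μ, (μ[X (n+1) | pastSigmaNat X (n+1)]) ω ≤ q :=
          hcond (n+1) (by simp [Finset.mem_Icc]; omega)
        calc ∫ ω, f ω * X (n+1) ω ∂μ
            = ∫ ω, (μ[fun ω => f ω * X (n+1) ω | pastSigmaNat X (n+1)]) ω ∂μ :=
              (integral_condExp hm).symm
          _ = ∫ ω, f ω * (μ[X (n+1) | pastSigmaNat X (n+1)]) ω ∂μ :=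
              integral_congr_ae hpull
          _ ≤ ∫ ω, f ω * q ∂μ := by
              refine integral_mono_ae ?_ ((hprod_int _).mul_const q) ?_
              · exact (Integrable.bdd_mul integrable_condExp
                  (hfmeas.mono hm).aestronglyMeasurable
                  (by filter_upwards with ω;
                      rw [Real.norm_of_nonneg (hprod_nonneg _ ω)];
                      exact hprod_le _ ω))
              · filter_upwards [hcond'] with ω hω
                exact mul_le_mul_of_nonneg_left hω (hprod_nonneg _ ω)
          _ = q * ∫ ω, f ω ∂μ := by rw [integral_mul_const, mul_comm]
      have hfint_nonneg : 0 ≤ ∫ ω, f ω ∂μ :=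
        integral_nonneg fun ω => hprod_nonneg _ ω
      have hexpand : ∫ ω, (1 + 3 * X (n+1) ω) * f ω ∂μ
          = ∫ ω, f ω ∂μ + 3 * ∫ ω, f ω * X (n+1) ω ∂μ := by
        rw [← integral_const_mul]
        rw [← integral_add (hprod_int _) (hfXint.const_mul 3)]
        congr 1; funext ω; ring
      calc ∫ ω, (1 + 3 * X (n+1) ω) * f ω ∂μ
          = ∫ ω, f ω ∂μ + 3 * ∫ ω, f ω * X (n+1) ω ∂μ := hexpand
        _ ≤ ∫ ω, f ω ∂μ + 3 * (q * ∫ ω, f ω ∂μ) := by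
            have := hstep; nlinarith
        _ = (1 + 3*q) * ∫ ω, f ω ∂μ := by ring
        _ ≤ (1 + 3*q) * (1 + 3*q) ^ (Finset.Icc L n).card := by
            refine mul_le_mul_of_nonneg_left (ih (by omega)) (by nlinarith)
        _ = (1 + 3*q) ^ ((Finset.Icc L n).card + 1) := by ring
    · have : Finset.Icc L (n+1) = ∅ := by
        rw [Finset.Icc_eq_empty_iff]; omega
      simp [this]

private lemma arith_sum_bound' (q s : ℝ) (hq0 : 0 < q) (hs : 0 ≤ s) (T : ℕ) :
    ∑ m ∈ Finset.Icc 1 T, (1 + 3*q) ^ m * (4:ℝ) ^ (-(s + 6 * m * q)) ≤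
      (2:ℝ) ^ (-s) / (4 * q) := by
  set r : ℝ := (1 + 3*q) * (4:ℝ) ^ (-(6*q)) with hr_def
  have hr0 : 0 ≤ r := by positivity
  have hr_exp : r ≤ Real.exp (-(4*q)) := by
    have h1 : 1 + 3*q ≤ Real.exp (3*q) := by
      have := Real.add_one_le_exp (3*q); linarith
    have h2 : (4:ℝ) ^ (-(6*q)) = Real.exp (Real.log 4 * -(6*q)) :=
      Real.rpow_def_of_pos (by norm_num) _
    have hlog4 : Real.log 4 = 2 * Real.log 2 := by
      rw [show (4:ℝ) = 2^2 by norm_num, Real.log_pow]; push_cast; ring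
    have hl2 : (0.6931471803 : ℝ) < Real.log 2 := Real.log_two_gt_d9
    calc r ≤ Real.exp (3*q) * Real.exp (Real.log 4 * -(6*q)) := by
          rw [hr_def, h2]
          exact mul_le_mul_of_nonneg_right h1 (Real.exp_pos _).le
      _ = Real.exp (3*q + Real.log 4 * -(6*q)) := (Real.exp_add _ _).symm
      _ ≤ Real.exp (-(4*q)) := by
          apply Real.exp_le_exp.mpr
          rw [hlog4]; nlinarith
  have hrlt1 : r < 1 := hr_exp.trans_lt (Real.exp_lt_one_iff.mpr (by linarith))
  have hkey : r * (1 + 4*q) ≤ 1 := by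
    have h1 : 1 + 4*q ≤ Real.exp (4*q) := by
      have := Real.add_one_le_exp (4*q); linarith
    calc r * (1 + 4*q) ≤ Real.exp (-(4*q)) * Real.exp (4*q) :=
          mul_le_mul hr_exp h1 (by linarith) (Real.exp_pos _).le
      _ = 1 := by rw [← Real.exp_add]; simp
  have htel : ∀ n : ℕ, (1 - r) * ∑ m ∈ Finset.Icc 1 n, r ^ m = r - r ^ (n+1) := by
    intro n
    induction n with
    | zero => simp
    | succ n ih =>
      rw [← Finset.insert_Icc_right_eq_Icc_add_one (by omega : 1 ≤ n + 1),
        Finset.sum_insert (by simp), mul_add, ih]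
      ring
  have hgeom : ∑ m ∈ Finset.Icc 1 T, r ^ m ≤ 1 / (4*q) := by
    have hS0 : 0 ≤ ∑ m ∈ Finset.Icc 1 T, r ^ m :=
      Finset.sum_nonneg fun m _ => pow_nonneg hr0 m
    have h1 : (1 - r) * ∑ m ∈ Finset.Icc 1 T, r ^ m ≤ r := by
      rw [htel T]
      have : 0 ≤ r ^ (T+1) := pow_nonneg hr0 _
      linarith
    rw [le_div_iff₀ (by positivity : (0:ℝ) < 4*q)]
    nlinarith [mul_le_mul_of_nonneg_left h1 (by linarith : (0:ℝ) ≤ 4*q),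
      mul_nonneg hS0 hq0.le, hkey, hrlt1]
  have hterm : ∀ m : ℕ, (1 + 3*q) ^ m * (4:ℝ) ^ (-(s + 6 * m * q)) =
      (4:ℝ) ^ (-s) * r ^ m := by
    intro m
    have h4 : (0:ℝ) < 4 := by norm_num
    have e1 : (4:ℝ) ^ (-(s + 6 * m * q)) = (4:ℝ) ^ (-s) * (4:ℝ) ^ (-(6*q) * m) := by
      rw [← Real.rpow_add h4]; ring_nf
    have e2 : (4:ℝ) ^ (-(6*q) * (m:ℝ)) = ((4:ℝ) ^ (-(6*q))) ^ (m:ℕ) := by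
      rw [Real.rpow_mul h4.le, Real.rpow_natCast]
    rw [e1, e2, hr_def, mul_pow]
    ring
  calc ∑ m ∈ Finset.Icc 1 T, (1 + 3*q) ^ m * (4:ℝ) ^ (-(s + 6 * m * q))
      = (4:ℝ) ^ (-s) * ∑ m ∈ Finset.Icc 1 T, r ^ m := by
        rw [Finset.mul_sum]
        exact Finset.sum_congr rfl fun m _ => hterm m
    _ ≤ (4:ℝ) ^ (-s) * (1 / (4*q)) := by
        exact mul_le_mul_of_nonneg_left hgeom (by positivity)
    _ ≤ (2:ℝ) ^ (-s) * (1 / (4*q)) := by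
        refine mul_le_mul_of_nonneg_right ?_ (by positivity)
        have : (4:ℝ) ^ (-s) = (2:ℝ) ^ (2 * (-s)) := by
          rw [Real.rpow_mul (by norm_num : (0:ℝ) ≤ 2)]
          norm_num
        rw [this]
        exact Real.rpow_le_rpow_of_exponent_le (by norm_num) (by linarith)
    _ = (2:ℝ) ^ (-s) / (4 * q) := by ring


/-- If `X 1, …, X T` are `{0,1}`-valued random variables such that the
conditional expectation of `X i` given `X 1, …, X (i-1)` is at most `q` a.s., `0 < q < 1`,
then for every real `w > 0`, the probability that some suffix sum
`∑_{i = T - m + 1}^{T} X i` (for `1 ≤ m ≤ T`) is at least `√w + 6 m q` is at most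
`2^{-√w} / (4 q)`. -/
theorem interval_error_bound
    {Ω : Type*} [mΩ : MeasurableSpace Ω] (μ : Measure Ω) [IsProbabilityMeasure μ]
    (T : ℕ) (X : ℕ → Ω → ℝ) (q : ℝ) (hq0 : 0 < q) (hq1 : q < 1)
    (hmeas : ∀ i, Measurable (X i))
    (h01 : ∀ i ω, X i ω = 0 ∨ X i ω = 1)
    (hcond : ∀ i ∈ Finset.Icc 1 T, ∀ᵐ ω ∂μ, (μ[X i | pastSigmaNat X i]) ω ≤ q)
    (w : ℝ) (hw : 0 < w) :
    μ {ω | ∃ m : ℕ, 1 ≤ m ∧ m ≤ T ∧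
        Real.sqrt w + 6 * m * q ≤ ∑ i ∈ Finset.Icc (T - m + 1) T, X i ω} ≤
      ENNReal.ofReal ((2 : ℝ) ^ (-Real.sqrt w) / (4 * q)) := by
  set s : ℝ := Real.sqrt w with hs_def
  have hs : 0 ≤ s := Real.sqrt_nonneg w
  -- pointwise identity
  have hpoint : ∀ (F : Finset ℕ) ω,
      (4:ℝ) ^ (∑ i ∈ F, X i ω) = ∏ i ∈ F, (1 + 3 * X i ω) := by
    intro F ω
    rw [Real.rpow_def_of_pos (by norm_num : (0:ℝ) < 4), Finset.mul_sum, Real.exp_sum]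
    refine Finset.prod_congr rfl fun i _ => ?_
    rcases h01 i ω with h | h <;> rw [h]
    · simp
    · rw [mul_one, Real.exp_log (by norm_num : (0:ℝ) < 4)]; norm_num
  -- per-m Markov bound
  have hA : ∀ m ∈ Finset.Icc 1 T,
      μ {ω | s + 6 * m * q ≤ ∑ i ∈ Finset.Icc (T - m + 1) T, X i ω} ≤
        ENNReal.ofReal ((1 + 3*q) ^ m * (4:ℝ) ^ (-(s + 6 * m * q))) := by
    intro m hm
    simp only [Finset.mem_Icc] at hm
    obtain ⟨hm1, hmT⟩ := hm
    set L := T - m + 1 with hL_def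
    set t : ℝ := s + 6 * m * q with ht_def
    set Z : Ω → ℝ := fun ω => ∏ i ∈ Finset.Icc L T, (1 + 3 * X i ω) with hZ_def
    have hcard : (Finset.Icc L T).card = m := by
      rw [Nat.card_Icc]; omega
    have hZint_le : ∫ ω, Z ω ∂μ ≤ (1 + 3*q) ^ m := by
      have := prod_integral_le' hq0 hmeas h01 T hcond L (by omega) T le_rfl
      rwa [hcard] at this
    have hZnonneg : ∀ ω, 0 ≤ Z ω := by
      intro ω
      refine Finset.prod_nonneg fun i _ => ?_
      rcases h01 i ω with h | h <;> rw [h] <;> norm_num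
    have hZint : Integrable Z μ := by
      refine Integrable.mono' (integrable_const ((4:ℝ) ^ (Finset.Icc L T).card))
        (Finset.measurable_prod _ fun i _ =>
          (measurable_const.add ((hmeas i).const_mul 3))).aestronglyMeasurable ?_
      filter_upwards with ω
      rw [Real.norm_of_nonneg (hZnonneg ω)]
      calc Z ω ≤ ∏ _i ∈ Finset.Icc L T, (4:ℝ) := by
            refine Finset.prod_le_prod (fun i _ => ?_) (fun i _ => ?_) <;>
              rcases h01 i ω with h | h <;> rw [h] <;> norm_num
        _ = 4 ^ (Finset.Icc L T).card := by rw [Finset.prod_const]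
    have hsub : {ω | t ≤ ∑ i ∈ Finset.Icc L T, X i ω} ⊆ {ω | (4:ℝ) ^ t ≤ Z ω} := by
      intro ω hω
      simp only [Set.mem_setOf_eq] at hω ⊢
      calc (4:ℝ) ^ t ≤ (4:ℝ) ^ (∑ i ∈ Finset.Icc L T, X i ω) :=
            Real.rpow_le_rpow_of_exponent_le (by norm_num) hω
        _ = Z ω := hpoint _ ω
    have hmar := mul_meas_ge_le_integral_of_nonneg
      (ae_of_all μ hZnonneg) hZint ((4:ℝ) ^ t)
    have h4t : (0:ℝ) < (4:ℝ) ^ t := Real.rpow_pos_of_pos (by norm_num) t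
    have htoReal : (μ {ω | t ≤ ∑ i ∈ Finset.Icc L T, X i ω}).toReal ≤
        (1 + 3*q) ^ m * (4:ℝ) ^ (-t) := by
      have hmono : (μ {ω | t ≤ ∑ i ∈ Finset.Icc L T, X i ω}).toReal ≤
          (μ {ω | (4:ℝ) ^ t ≤ Z ω}).toReal := by
        refine ENNReal.toReal_mono (measure_ne_top _ _) (measure_mono hsub)
      have h2 : (μ {ω | (4:ℝ) ^ t ≤ Z ω}).toReal ≤ (∫ ω, Z ω ∂μ) / (4:ℝ) ^ t := by
        rw [le_div_iff₀ h4t]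
        calc (μ {ω | (4:ℝ) ^ t ≤ Z ω}).toReal * (4:ℝ) ^ t
            = (4:ℝ) ^ t * (μ {ω | (4:ℝ) ^ t ≤ Z ω}).toReal := by ring
          _ ≤ ∫ ω, Z ω ∂μ := hmar
      calc (μ {ω | t ≤ ∑ i ∈ Finset.Icc L T, X i ω}).toReal
          ≤ (∫ ω, Z ω ∂μ) / (4:ℝ) ^ t := hmono.trans h2
        _ ≤ (1 + 3*q) ^ m / (4:ℝ) ^ t := by
            gcongr
        _ = (1 + 3*q) ^ m * (4:ℝ) ^ (-t) := by
            rw [Real.rpow_neg (by norm_num : (0:ℝ) ≤ 4), div_eq_mul_inv]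
    calc μ {ω | t ≤ ∑ i ∈ Finset.Icc L T, X i ω}
        = ENNReal.ofReal (μ {ω | t ≤ ∑ i ∈ Finset.Icc L T, X i ω}).toReal :=
          (ENNReal.ofReal_toReal (measure_ne_top _ _)).symm
      _ ≤ ENNReal.ofReal ((1 + 3*q) ^ m * (4:ℝ) ^ (-t)) :=
          ENNReal.ofReal_le_ofReal htoReal
  -- union bound
  have hunion : {ω | ∃ m : ℕ, 1 ≤ m ∧ m ≤ T ∧
      s + 6 * m * q ≤ ∑ i ∈ Finset.Icc (T - m + 1) T, X i ω} ⊆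
      ⋃ m ∈ Finset.Icc 1 T, {ω | s + 6 * m * q ≤ ∑ i ∈ Finset.Icc (T - m + 1) T, X i ω} := by
    intro ω hω
    obtain ⟨m, hm1, hmT, hle⟩ := hω
    exact Set.mem_biUnion (Finset.mem_Icc.mpr ⟨hm1, hmT⟩) hle
  calc μ {ω | ∃ m : ℕ, 1 ≤ m ∧ m ≤ T ∧
        s + 6 * m * q ≤ ∑ i ∈ Finset.Icc (T - m + 1) T, X i ω}
      ≤ μ (⋃ m ∈ Finset.Icc 1 T,
          {ω | s + 6 * m * q ≤ ∑ i ∈ Finset.Icc (T - m + 1) T, X i ω}) :=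
        measure_mono hunion
    _ ≤ ∑ m ∈ Finset.Icc 1 T,
          μ {ω | s + 6 * m * q ≤ ∑ i ∈ Finset.Icc (T - m + 1) T, X i ω} :=
        measure_biUnion_finset_le _ _
    _ ≤ ∑ m ∈ Finset.Icc 1 T,
          ENNReal.ofReal ((1 + 3*q) ^ m * (4:ℝ) ^ (-(s + 6 * m * q))) :=
        Finset.sum_le_sum hA
    _ = ENNReal.ofReal (∑ m ∈ Finset.Icc 1 T,
          (1 + 3*q) ^ m * (4:ℝ) ^ (-(s + 6 * m * q))) := by
        rw [ENNReal.ofReal_sum_of_nonneg]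
        intro m _
        positivity
    _ ≤ ENNReal.ofReal ((2:ℝ) ^ (-s) / (4 * q)) :=
        ENNReal.ofReal_le_ofReal (arith_sum_bound' q s hq0 hs T)
end

section
/- Let κ ≥ 2 be a real number, and let N ≥ 0, M ≥ 0, c > 0 be reals and p ∈ (0,1]. Then: (i) Φ_κ(N, c + M/√κ, min(p, 1/√κ), 0) ≤ Φ_κ(N, c, p, M) + 2; (ii) if moreover p ≤ 1/√κ, then Φ_κ(N, c + M/√κ, min(p, 1/√κ), 0) ≤ Φ_κ(N, c, p, M); and (iii) if moreover M ≥ 2·ln κ, then Φ_κ(N, c + M/√κ, min(p, 1/√κ), 0) ≤ Φ_κ(N, c, p, M). -/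
/-- The potential function of the Decodable Backoff Algorithm:
`Φ_κ(N, c, p, M) = N + max(0, 4κ·ln(c/√κ)/ln κ) + 4·ln(1/p)/ln κ + 5M/ln κ`. -/
noncomputable def Phi (κ N c p M : ℝ) : ℝ :=
  N + max 0 (4 * κ * Real.log (c / Real.sqrt κ) / Real.log κ)
    + 4 * Real.log (1 / p) / Real.log κ + 5 * M / Real.log κ

/-- the packet-activation lemma. When all `M` inactive packets activate,
(i) the potential increases by at most 2; (ii) it does not increase if `p ≤ 1/√κ`;
(iii) it does not increase if `M ≥ 2·ln κ`. -/
theorem activation_lemma (κ N c p M : ℝ) (hκ : 2 ≤ κ) (hN : 0 ≤ N) (hM : 0 ≤ M)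
    (hc : 0 < c) (hp0 : 0 < p) (hp1 : p ≤ 1) :
    Phi κ N (c + M / Real.sqrt κ) (min p (1 / Real.sqrt κ)) 0 ≤ Phi κ N c p M + 2 ∧
    (p ≤ 1 / Real.sqrt κ →
      Phi κ N (c + M / Real.sqrt κ) (min p (1 / Real.sqrt κ)) 0 ≤ Phi κ N c p M) ∧
    (2 * Real.log κ ≤ M →
      Phi κ N (c + M / Real.sqrt κ) (min p (1 / Real.sqrt κ)) 0 ≤ Phi κ N c p M) := by
  have hκ0 : (0:ℝ) < κ := by linarith
  have hκ1 : (1:ℝ) < κ := by linarith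
  have hL : 0 < Real.log κ := Real.log_pos hκ1
  set s := Real.sqrt κ with hsdef
  have hs1 : 1 < s := by
    have h := Real.sqrt_lt_sqrt (by norm_num : (0:ℝ) ≤ 1) (by linarith : (1:ℝ) < κ)
    simpa using h
  have hs0 : 0 < s := by linarith
  have hsq : s ^ 2 = κ := Real.sq_sqrt (le_of_lt hκ0)
  have hlogs : Real.log s = Real.log κ / 2 := Real.log_sqrt (le_of_lt hκ0)
  have hlogp : 0 ≤ Real.log (1 / p) :=
    Real.log_nonneg (by rw [le_div_iff₀ hp0]; linarith)
  -- log term bound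
  have keyLT : 4 * Real.log (1 / min p (1 / s)) / Real.log κ
      ≤ 4 * Real.log (1 / p) / Real.log κ + 2 := by
    rcases le_total p (1 / s) with h | h
    · rw [min_eq_left h]; linarith
    · rw [min_eq_right h, one_div_one_div, hlogs]
      have : 4 * (Real.log κ / 2) / Real.log κ = 2 := by field_simp; ring
      rw [this]
      have : 0 ≤ 4 * Real.log (1 / p) / Real.log κ := by positivity
      linarith
  -- contention term bound
  set c' := c + M / s with hc'def
  have hc'pos : 0 < c' := by positivity
  set c₀ := max c s with hc0def
  have hc₀s : s ≤ c₀ := le_max_right _ _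
  have hc₀pos : 0 < c₀ := lt_of_lt_of_le hs0 hc₀s
  have h1 : max 0 (4 * κ * Real.log (c / s) / Real.log κ)
      = 4 * κ * Real.log (c₀ / s) / Real.log κ := by
    rcases le_total c s with h | h
    · rw [hc0def, max_eq_right h]
      have hcs1 : c / s ≤ 1 := (div_le_one hs0).mpr h
      have : Real.log (c / s) ≤ 0 := Real.log_nonpos (by positivity) hcs1
      rw [div_self (ne_of_gt hs0), Real.log_one, max_eq_left]
      · ring
      · have : 4 * κ * Real.log (c / s) ≤ 0 := by nlinarith
        exact div_nonpos_of_nonpos_of_nonneg this (le_of_lt hL)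
    · rw [hc0def, max_eq_left h]
      have : 0 ≤ Real.log (c / s) := Real.log_nonneg ((one_le_div hs0).mpr h)
      rw [max_eq_right]
      positivity
  have h2 : Real.log (c' / s) ≤ Real.log (c₀ / s) + M / κ := by
    have hd : Real.log (c' / s) - Real.log (c₀ / s) = Real.log (c' / c₀) := by
      rw [Real.log_div (ne_of_gt hc'pos) (ne_of_gt hs0),
          Real.log_div (ne_of_gt hc₀pos) (ne_of_gt hs0),
          Real.log_div (ne_of_gt hc'pos) (ne_of_gt hc₀pos)]
      ring
    have hle : Real.log (c' / c₀) ≤ c' / c₀ - 1 :=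
      Real.log_le_sub_one_of_pos (by positivity)
    have hstep : c' / c₀ - 1 ≤ M / κ := by
      rw [div_sub_one (ne_of_gt hc₀pos), div_le_div_iff₀ hc₀pos hκ0]
      have hcc : c ≤ c₀ := le_max_left _ _
      have hMs : s * (c' - c₀) ≤ M := by
        have : c' - c₀ ≤ M / s := by
          have : c' - c = M / s := by rw [hc'def]; ring
          linarith
        calc s * (c' - c₀) ≤ s * (M / s) := by
              exact mul_le_mul_of_nonneg_left this (le_of_lt hs0)
          _ = M := by field_simp
      nlinarith
    linarith
  have keyCT : max 0 (4 * κ * Real.log (c' / s) / Real.log κ)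
      ≤ max 0 (4 * κ * Real.log (c / s) / Real.log κ) + 4 * M / Real.log κ := by
    rw [h1]
    have hrhs0 : 0 ≤ 4 * κ * Real.log (c₀ / s) / Real.log κ + 4 * M / Real.log κ := by
      have : 0 ≤ Real.log (c₀ / s) := Real.log_nonneg ((one_le_div hs0).mpr hc₀s)
      positivity
    apply max_le hrhs0
    have : 4 * κ * Real.log (c' / s) ≤ 4 * κ * Real.log (c₀ / s) + 4 * M := by
      have h4 : 4 * κ * (M / κ) = 4 * M := by field_simp
      nlinarith
    calc 4 * κ * Real.log (c' / s) / Real.log κ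
        ≤ (4 * κ * Real.log (c₀ / s) + 4 * M) / Real.log κ := by gcongr
      _ = 4 * κ * Real.log (c₀ / s) / Real.log κ + 4 * M / Real.log κ := by ring
  have hML : 0 ≤ M / Real.log κ := by positivity
  refine ⟨?_, ?_, ?_⟩
  · simp only [Phi]
    have : 5 * (0:ℝ) / Real.log κ = 0 := by ring
    rw [this]
    have h4M : 4 * M / Real.log κ ≤ 5 * M / Real.log κ := by
      gcongr <;> linarith
    linarith
  · intro hps
    simp only [Phi]
    rw [min_eq_left hps]
    have : 5 * (0:ℝ) / Real.log κ = 0 := by ring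
    rw [this]
    have h4M : 4 * M / Real.log κ + M / Real.log κ = 5 * M / Real.log κ := by ring
    linarith
  · intro hMbig
    simp only [Phi]
    have : 5 * (0:ℝ) / Real.log κ = 0 := by ring
    rw [this]
    have h2M : 2 ≤ M / Real.log κ := by
      rw [le_div_iff₀ hL]; linarith
    have h4M : 4 * M / Real.log κ + M / Real.log κ = 5 * M / Real.log κ := by ring
    linarith
end

section
/- Let κ > 1 be a real number and let N, M, ℓ, i ≥ 0 be reals with ℓ ≤ N. Let c, c', p, p' be reals with 0 < c' ≤ c and 0 < p ≤ p' ≤ 1. Then Φ_κ(N − ℓ + i, c', p', M + i) ≤ Φ_κ(N, c, p, M) − ℓ + i·(1 + 5/ln κ). -/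
/-- the successful-epoch lemma. If `ℓ` packets are delivered, `i` packets
arrive inactive, the contention does not increase, and the minimum joining probability
does not decrease, then the potential decreases by at least `ℓ − i·(1 + 5/ln κ)`. -/
theorem successful_epoch (κ N M ℓ i c c' p p' : ℝ) (hκ : 1 < κ)
    (hN : 0 ≤ N) (hM : 0 ≤ M) (hℓ : 0 ≤ ℓ) (hi : 0 ≤ i) (hℓN : ℓ ≤ N)
    (hc' : 0 < c') (hcc : c' ≤ c) (hp : 0 < p) (hpp : p ≤ p') (hp' : p' ≤ 1) :
    Phi κ (N - ℓ + i) c' p' (M + i) ≤ Phi κ N c p M - ℓ + i * (1 + 5 / Real.log κ) := by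
  have hL : 0 < Real.log κ := Real.log_pos hκ
  have hκ0 : 0 < κ := lt_trans one_pos hκ
  have hmax : max 0 (4 * κ * Real.log (c' / Real.sqrt κ) / Real.log κ)
      ≤ max 0 (4 * κ * Real.log (c / Real.sqrt κ) / Real.log κ) := by
    apply max_le_max le_rfl
    have hs : (0:ℝ) < Real.sqrt κ := Real.sqrt_pos.mpr hκ0
    have hlog2 : Real.log (c' / Real.sqrt κ) ≤ Real.log (c / Real.sqrt κ) :=
      Real.log_le_log (by positivity) (by gcongr)
    have h4κ : (0:ℝ) ≤ 4 * κ := by positivity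
    exact div_le_div_of_nonneg_right (c := Real.log κ) (mul_le_mul_of_nonneg_left hlog2 h4κ) hL.le
  have hp'0 : 0 < p' := lt_of_lt_of_le hp hpp
  have hlog : Real.log (1 / p') ≤ Real.log (1 / p) := by
    apply Real.log_le_log (by positivity)
    exact one_div_le_one_div_of_le hp hpp
  have key : Phi κ (N - ℓ + i) c' p' (M + i)
      ≤ Phi κ N c p M - ℓ + i + 5 * i / Real.log κ := by
    unfold Phi
    have h1 : 4 * Real.log (1 / p') / Real.log κ ≤ 4 * Real.log (1 / p) / Real.log κ := by
      gcongr
    have h2 : 5 * (M + i) / Real.log κ = 5 * M / Real.log κ + 5 * i / Real.log κ := by ring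
    linarith
  calc Phi κ (N - ℓ + i) c' p' (M + i)
      ≤ Phi κ N c p M - ℓ + i + 5 * i / Real.log κ := key
    _ = Phi κ N c p M - ℓ + i * (1 + 5 / Real.log κ) := by ring
end

section
/- Let κ > 1 be a real number, and let N, M, i ≥ 0, c > 0 and p ∈ (0,1] be reals. Then Φ_κ(N + i, c·κ^{−1/4}, p·κ^{−1/4}, M + i) ≤ Φ_κ(N, c, p, M) + 1 + i·(1 + 5/ln κ). -/
/-- the overfull case of the error-epoch lemma. In an overfull epoch with
`i` arrivals, all joining probabilities (hence `c` and `p`) are multiplied by `κ^{-1/4}`,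
and the potential increases by at most `1 + i·(1 + 5/ln κ)`. -/
theorem overfull_error_epoch (κ N M i c p : ℝ) (hκ : 1 < κ)
    (hN : 0 ≤ N) (hM : 0 ≤ M) (hi : 0 ≤ i) (hc : 0 < c) (hp0 : 0 < p) (hp1 : p ≤ 1) :
    Phi κ (N + i) (c * κ ^ (-(1 : ℝ) / 4)) (p * κ ^ (-(1 : ℝ) / 4)) (M + i) ≤
      Phi κ N c p M + 1 + i * (1 + 5 / Real.log κ) := by
  have hκ0 : (0:ℝ) < κ := lt_trans one_pos hκ
  have hL : 0 < Real.log κ := Real.log_pos hκ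
  have hr : (0:ℝ) < κ ^ (-(1:ℝ)/4) := Real.rpow_pos_of_pos hκ0 _
  have hs : (0:ℝ) < Real.sqrt κ := Real.sqrt_pos.mpr hκ0
  have hlogr : Real.log (κ ^ (-(1:ℝ)/4)) = -(1:ℝ)/4 * Real.log κ :=
    Real.log_rpow hκ0 _
  have h1 : Real.log (c * κ ^ (-(1:ℝ)/4) / Real.sqrt κ)
      = Real.log (c / Real.sqrt κ) - Real.log κ / 4 := by
    rw [Real.log_div (by positivity) (ne_of_gt hs),
        Real.log_mul (ne_of_gt hc) (ne_of_gt hr), hlogr,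
        Real.log_div (ne_of_gt hc) (ne_of_gt hs)]
    ring
  have h2 : Real.log (1 / (p * κ ^ (-(1:ℝ)/4)))
      = Real.log (1 / p) + Real.log κ / 4 := by
    rw [Real.log_div one_ne_zero (by positivity),
        Real.log_mul (ne_of_gt hp0) (ne_of_gt hr), hlogr,
        Real.log_div one_ne_zero (ne_of_gt hp0)]
    ring
  unfold Phi
  rw [h1, h2]
  have hmax : max 0 (4 * κ * (Real.log (c / Real.sqrt κ) - Real.log κ / 4) / Real.log κ)
      ≤ max 0 (4 * κ * Real.log (c / Real.sqrt κ) / Real.log κ) := by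
    apply max_le_max le_rfl
    have : 4 * κ * (Real.log (c / Real.sqrt κ) - Real.log κ / 4) / Real.log κ
        = 4 * κ * Real.log (c / Real.sqrt κ) / Real.log κ - κ := by
      field_simp
    rw [this]; linarith
  have h4 : 4 * (Real.log (1 / p) + Real.log κ / 4) / Real.log κ
      = 4 * Real.log (1 / p) / Real.log κ + 1 := by field_simp
  have h5 : 5 * (M + i) / Real.log κ = 5 * M / Real.log κ + i * (5 / Real.log κ) := by
    field_simp
  rw [h4, h5]
  nlinarith [hmax, mul_nonneg hi (le_of_lt (div_pos (by norm_num : (0:ℝ)<5) hL))]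
end

section
/- Let κ ≥ 2 be a real number, and let N, M, i ≥ 0, c > 0 and p ∈ (0,1] be reals. Then Φ_κ(N + i, c·κ^{1/4} + (M + i)/√κ, min(p·κ^{1/4}, 1/√κ), 0) ≤ Φ_κ(N, c, p, M) + κ + 2 + i·(1 + 5/ln κ). -/
set_option maxHeartbeats 1000000

/-- the silent case of the error-epoch lemma, combined with the subsequent
packet activations. In a silent epoch with `i` arrivals, all joining probabilities are
multiplied by `κ^{1/4}`, then all `M + i` inactive packets activate with initial joining
probability `1/√κ`; the potential increases by at most `κ + 2 + i·(1 + 5/ln κ)`. -/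
theorem silent_error_epoch (κ N M i c p : ℝ) (hκ : 2 ≤ κ)
    (hN : 0 ≤ N) (hM : 0 ≤ M) (hi : 0 ≤ i) (hc : 0 < c) (hp0 : 0 < p) (hp1 : p ≤ 1) :
    Phi κ (N + i) (c * κ ^ ((1 : ℝ) / 4) + (M + i) / Real.sqrt κ)
        (min (p * κ ^ ((1 : ℝ) / 4)) (1 / Real.sqrt κ)) 0 ≤
      Phi κ N c p M + κ + 2 + i * (1 + 5 / Real.log κ) := by
  have hκ0 : (0:ℝ) < κ := by linarith
  have hκ1 : (1:ℝ) < κ := by linarith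
  have hL : 0 < Real.log κ := Real.log_pos hκ1
  have hsq : 0 < Real.sqrt κ := Real.sqrt_pos.mpr hκ0
  have hq : 0 < κ ^ ((1:ℝ)/4) := Real.rpow_pos_of_pos hκ0 _
  have hlogq : Real.log (κ ^ ((1:ℝ)/4)) = Real.log κ / 4 := by
    rw [Real.log_rpow hκ0]; ring
  have hlogsq : Real.log (Real.sqrt κ) = Real.log κ / 2 := Real.log_sqrt hκ0.le
  have hm : 0 ≤ M + i := by positivity
  -- p-term
  have T1 : 4 * Real.log (1 / min (p * κ ^ ((1:ℝ)/4)) (1 / Real.sqrt κ)) / Real.log κ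
      ≤ 4 * Real.log (1 / p) / Real.log κ + 2 := by
    rcases le_total (p * κ ^ ((1:ℝ)/4)) (1 / Real.sqrt κ) with h | h
    · rw [min_eq_left h]
      have h1 : Real.log (1 / (p * κ ^ ((1:ℝ)/4))) = Real.log (1 / p) - Real.log κ / 4 := by
        rw [Real.log_div one_ne_zero (by positivity),
          Real.log_div one_ne_zero (ne_of_gt hp0),
          Real.log_mul (ne_of_gt hp0) (ne_of_gt hq), hlogq]
        ring
      rw [h1]
      have h2 : 4 * (Real.log (1 / p) - Real.log κ / 4) / Real.log κ
          = 4 * Real.log (1 / p) / Real.log κ - 1 := by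
        field_simp
      rw [h2]; linarith
    · rw [min_eq_right h]
      have h1 : Real.log (1 / (1 / Real.sqrt κ)) = Real.log κ / 2 := by
        rw [one_div_one_div, hlogsq]
      rw [h1]
      have h2 : 4 * (Real.log κ / 2) / Real.log κ = 2 := by field_simp; ring
      rw [h2]
      have h3 : 0 ≤ Real.log (1 / p) := by
        apply Real.log_nonneg
        rw [le_div_iff₀ hp0]; linarith
      have : 0 ≤ 4 * Real.log (1 / p) / Real.log κ := by positivity
      linarith
  -- c-term
  have hx : 0 < c / Real.sqrt κ := div_pos hc hsq
  have hss : Real.sqrt κ * Real.sqrt κ = κ := Real.mul_self_sqrt hκ0.le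
  have hsplit : (c * κ ^ ((1:ℝ)/4) + (M + i) / Real.sqrt κ) / Real.sqrt κ
      = c / Real.sqrt κ * κ ^ ((1:ℝ)/4) + (M + i) / κ := by
    field_simp
    linear_combination (-(M + i)) * hss
  have hy : 0 < c / Real.sqrt κ * κ ^ ((1:ℝ)/4) := mul_pos hx hq
  have hlogy : Real.log (c / Real.sqrt κ * κ ^ ((1:ℝ)/4))
      = Real.log (c / Real.sqrt κ) + Real.log κ / 4 := by
    rw [Real.log_mul (ne_of_gt hx) (ne_of_gt hq), hlogq]
  -- key: log (y + (M+i)/κ) ≤ max 0 (log y) + (M+i)/κ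
  have hkey : Real.log (c / Real.sqrt κ * κ ^ ((1:ℝ)/4) + (M + i) / κ)
      ≤ max 0 (Real.log (c / Real.sqrt κ * κ ^ ((1:ℝ)/4))) + (M + i) / κ := by
    have hmκ : 0 ≤ (M + i) / κ := by positivity
    have hmax1 : (1:ℝ) ≤ max (c / Real.sqrt κ * κ ^ ((1:ℝ)/4)) 1 := le_max_right _ _
    have hbound : c / Real.sqrt κ * κ ^ ((1:ℝ)/4) + (M + i) / κ
        ≤ max (c / Real.sqrt κ * κ ^ ((1:ℝ)/4)) 1 * (1 + (M + i) / κ) := by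
      have h1 : c / Real.sqrt κ * κ ^ ((1:ℝ)/4)
          ≤ max (c / Real.sqrt κ * κ ^ ((1:ℝ)/4)) 1 := le_max_left _ _
      nlinarith
    have hpos1 : 0 < max (c / Real.sqrt κ * κ ^ ((1:ℝ)/4)) 1 :=
      lt_of_lt_of_le one_pos hmax1
    have hpos2 : 0 < 1 + (M + i) / κ := by linarith
    calc Real.log (c / Real.sqrt κ * κ ^ ((1:ℝ)/4) + (M + i) / κ)
        ≤ Real.log (max (c / Real.sqrt κ * κ ^ ((1:ℝ)/4)) 1 * (1 + (M + i) / κ)) :=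
          Real.log_le_log (by positivity) hbound
      _ = Real.log (max (c / Real.sqrt κ * κ ^ ((1:ℝ)/4)) 1) + Real.log (1 + (M + i) / κ) :=
          Real.log_mul (ne_of_gt hpos1) (ne_of_gt hpos2)
      _ ≤ max 0 (Real.log (c / Real.sqrt κ * κ ^ ((1:ℝ)/4))) + (M + i) / κ := by
          have hA : Real.log (max (c / Real.sqrt κ * κ ^ ((1:ℝ)/4)) 1)
              = max 0 (Real.log (c / Real.sqrt κ * κ ^ ((1:ℝ)/4))) := by
            rcases le_total (c / Real.sqrt κ * κ ^ ((1:ℝ)/4)) 1 with h | h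
            · rw [max_eq_right h, Real.log_one, max_eq_left (Real.log_nonpos hy.le h)]
            · rw [max_eq_left h, max_eq_right (Real.log_nonneg h)]
          have hB : Real.log (1 + (M + i) / κ) ≤ (M + i) / κ := by
            have := Real.log_le_sub_one_of_pos hpos2
            linarith
          linarith
  have T2 : max 0 (4 * κ * Real.log ((c * κ ^ ((1:ℝ)/4) + (M + i) / Real.sqrt κ)
        / Real.sqrt κ) / Real.log κ)
      ≤ max 0 (4 * κ * Real.log (c / Real.sqrt κ) / Real.log κ) + κ
        + 4 * (M + i) / Real.log κ := by
    have hmax0 : 0 ≤ max 0 (4 * κ * Real.log (c / Real.sqrt κ) / Real.log κ) :=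
      le_max_left _ _
    have hm4 : 0 ≤ 4 * (M + i) / Real.log κ := by positivity
    apply max_le (by linarith)
    rw [hsplit]
    have hmaxy : max 0 (Real.log (c / Real.sqrt κ * κ ^ ((1:ℝ)/4)))
        ≤ max 0 (Real.log (c / Real.sqrt κ)) + Real.log κ / 4 := by
      rw [hlogy]
      apply max_le
      · have : 0 ≤ max 0 (Real.log (c / Real.sqrt κ)) := le_max_left _ _
        linarith
      · have : Real.log (c / Real.sqrt κ) ≤ max 0 (Real.log (c / Real.sqrt κ)) :=
          le_max_right _ _
        linarith
    have hlog : Real.log (c / Real.sqrt κ * κ ^ ((1:ℝ)/4) + (M + i) / κ)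
        ≤ max 0 (Real.log (c / Real.sqrt κ)) + Real.log κ / 4 + (M + i) / κ := by
      linarith [hkey]
    have hstep : 4 * κ * Real.log (c / Real.sqrt κ * κ ^ ((1:ℝ)/4) + (M + i) / κ) / Real.log κ
        ≤ 4 * κ * (max 0 (Real.log (c / Real.sqrt κ)) + Real.log κ / 4 + (M + i) / κ)
          / Real.log κ := by
      gcongr
    have heq : 4 * κ * (max 0 (Real.log (c / Real.sqrt κ)) + Real.log κ / 4 + (M + i) / κ)
          / Real.log κ
        = 4 * κ * max 0 (Real.log (c / Real.sqrt κ)) / Real.log κ + κ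
          + 4 * (M + i) / Real.log κ := by
      field_simp
    have hmaxeq : 4 * κ * max 0 (Real.log (c / Real.sqrt κ)) / Real.log κ
        = max 0 (4 * κ * Real.log (c / Real.sqrt κ) / Real.log κ) := by
      rcases le_total (Real.log (c / Real.sqrt κ)) 0 with h | h
      · rw [max_eq_left h, max_eq_left]
        · simp
        · apply div_nonpos_of_nonpos_of_nonneg _ hL.le
          nlinarith
      · rw [max_eq_right h, max_eq_right]
        positivity
    calc 4 * κ * Real.log (c / Real.sqrt κ * κ ^ ((1:ℝ)/4) + (M + i) / κ) / Real.log κ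
        ≤ 4 * κ * (max 0 (Real.log (c / Real.sqrt κ)) + Real.log κ / 4 + (M + i) / κ)
            / Real.log κ := hstep
      _ = 4 * κ * max 0 (Real.log (c / Real.sqrt κ)) / Real.log κ + κ
            + 4 * (M + i) / Real.log κ := heq
      _ ≤ max 0 (4 * κ * Real.log (c / Real.sqrt κ) / Real.log κ) + κ
            + 4 * (M + i) / Real.log κ := by rw [hmaxeq]
  -- assemble
  have h5m : 4 * (M + i) / Real.log κ ≤ 5 * M / Real.log κ + 5 * i / Real.log κ := by
    rw [← add_div, div_le_div_iff_of_pos_right hL]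
    linarith
  unfold Phi
  have h40 : (5:ℝ) * 0 / Real.log κ = 0 := by simp
  have hexp : i * (1 + 5 / Real.log κ) = i + 5 * i / Real.log κ := by
    field_simp
  rw [h40, hexp]
  linarith [T1, T2, h5m]
end

section
/- Let κ > 1 be a real number, and let N, M ≥ 0 and p ∈ (0,1] be reals, and let c be a real with c ≥ κ^{3/4}. Then Φ_κ(N, c·κ^{−1/4}, p·κ^{−1/4}, M) ≤ Φ_κ(N, c, p, M) − (κ − 1). -/
/-- Case 1 of the non-error-epoch lemma. In an overfull epoch that is not
an error epoch (`c ≥ κ^{3/4}`), all joining probabilities are multiplied by `κ^{-1/4}`,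
and the potential decreases by at least `κ − 1`. -/
theorem overfull_nonerror_epoch (κ N M c p : ℝ) (hκ : 1 < κ)
    (hN : 0 ≤ N) (hM : 0 ≤ M) (hc : κ ^ ((3 : ℝ) / 4) ≤ c) (hp0 : 0 < p) (hp1 : p ≤ 1) :
    Phi κ N (c * κ ^ (-(1 : ℝ) / 4)) (p * κ ^ (-(1 : ℝ) / 4)) M ≤
      Phi κ N c p M - (κ - 1) := by
  have hκ0 : (0:ℝ) < κ := lt_trans one_pos hκ
  have hL : 0 < Real.log κ := Real.log_pos hκ
  have hc0 : 0 < c := lt_of_lt_of_le (Real.rpow_pos_of_pos hκ0 _) hc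
  have hrp : (0:ℝ) < κ ^ (-(1:ℝ)/4) := Real.rpow_pos_of_pos hκ0 _
  have hsq : Real.sqrt κ = κ ^ ((1:ℝ)/2) := Real.sqrt_eq_rpow κ
  have hsq0 : (0:ℝ) < Real.sqrt κ := Real.sqrt_pos.2 hκ0
  have hlogc : (3:ℝ)/4 * Real.log κ ≤ Real.log c := by
    calc (3:ℝ)/4 * Real.log κ = Real.log (κ ^ ((3:ℝ)/4)) := (Real.log_rpow hκ0 _).symm
    _ ≤ Real.log c := (Real.log_le_log_iff (Real.rpow_pos_of_pos hκ0 _) hc0).2 hc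
  have hA : Real.log (c / Real.sqrt κ) = Real.log c - (1/2) * Real.log κ := by
    rw [Real.log_div hc0.ne' hsq0.ne', hsq, Real.log_rpow hκ0]
  have hA' : Real.log (c * κ ^ (-(1:ℝ)/4) / Real.sqrt κ)
      = Real.log c - (3/4) * Real.log κ := by
    rw [Real.log_div (by positivity) hsq0.ne', Real.log_mul hc0.ne' hrp.ne',
      Real.log_rpow hκ0, hsq, Real.log_rpow hκ0]; ring
  have hp' : Real.log (1 / (p * κ ^ (-(1:ℝ)/4)))
      = Real.log (1/p) + (1/4) * Real.log κ := by
    rw [one_div, Real.log_inv, Real.log_mul hp0.ne' hrp.ne', Real.log_rpow hκ0,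
      one_div, Real.log_inv]; ring
  unfold Phi
  rw [hA, hA', hp']
  have hm1 : max 0 (4 * κ * (Real.log c - (1/2) * Real.log κ) / Real.log κ)
      = 4 * κ * (Real.log c - (1/2) * Real.log κ) / Real.log κ :=
    max_eq_right (div_nonneg (mul_nonneg (by positivity) (by linarith)) hL.le)
  have hm2 : max 0 (4 * κ * (Real.log c - (3/4) * Real.log κ) / Real.log κ)
      = 4 * κ * (Real.log c - (3/4) * Real.log κ) / Real.log κ :=
    max_eq_right (div_nonneg (mul_nonneg (by positivity) (by linarith)) hL.le)
  rw [hm1, hm2]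
  have hLn : Real.log κ ≠ 0 := hL.ne'
  field_simp
  ring_nf
  exact le_refl _
end

section
/- Let κ > 1 be a real number, and let N, M ≥ 0 be reals, c > 0 with c·κ^{1/4} ≤ √κ, and p ∈ (0,1] with p·κ^{1/4} ≤ 1. Then Φ_κ(N, c·κ^{1/4}, p·κ^{1/4}, M) ≤ Φ_κ(N, c, p, M) − 1. -/
/-- Case 2 of the non-error-epoch lemma. In a silent epoch with low
contention (`c·κ^{1/4} ≤ √κ`), all joining probabilities are multiplied by `κ^{1/4}`,
and the potential decreases by at least `1`. -/
theorem silent_nonerror_epoch (κ N M c p : ℝ) (hκ : 1 < κ)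
    (hN : 0 ≤ N) (hM : 0 ≤ M) (hc0 : 0 < c) (hc : c * κ ^ ((1 : ℝ) / 4) ≤ Real.sqrt κ)
    (hp0 : 0 < p) (hp1 : p * κ ^ ((1 : ℝ) / 4) ≤ 1) :
    Phi κ N (c * κ ^ ((1 : ℝ) / 4)) (p * κ ^ ((1 : ℝ) / 4)) M ≤
      Phi κ N c p M - 1 := by
  have hκ0 : (0 : ℝ) < κ := lt_trans one_pos hκ
  have hlog : 0 < Real.log κ := Real.log_pos hκ
  have hr : (0 : ℝ) < κ ^ ((1 : ℝ) / 4) := Real.rpow_pos_of_pos hκ0 _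
  have hs : (0 : ℝ) < Real.sqrt κ := Real.sqrt_pos.mpr hκ0
  -- New max term is zero
  have hmax : max 0 (4 * κ * Real.log (c * κ ^ ((1 : ℝ) / 4) / Real.sqrt κ) / Real.log κ) = 0 := by
    apply max_eq_left
    apply div_nonpos_of_nonpos_of_nonneg _ hlog.le
    apply mul_nonpos_of_nonneg_of_nonpos (by positivity)
    exact Real.log_nonpos (by positivity) ((div_le_one hs).mpr hc)
  -- New log term
  have hlogp : Real.log (1 / (p * κ ^ ((1 : ℝ) / 4))) =
      Real.log (1 / p) - (1 / 4) * Real.log κ := by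
    rw [Real.log_div one_ne_zero (by positivity), Real.log_div one_ne_zero hp0.ne',
      Real.log_mul hp0.ne' hr.ne', Real.log_rpow hκ0]
    ring
  have key : 4 * Real.log (1 / (p * κ ^ ((1 : ℝ) / 4))) / Real.log κ =
      4 * Real.log (1 / p) / Real.log κ - 1 := by
    rw [hlogp]
    field_simp
  have hmaxold : 0 ≤ max 0 (4 * κ * Real.log (c / Real.sqrt κ) / Real.log κ) := le_max_left _ _
  unfold Phi
  rw [hmax, key]
  linarith
end
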